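/- Let w : [0,∞) → ℝ be a twice continuously differentiable function satisfying w''(t) − (3 g(t)² − 1) w(t) = g'(t) for all t ≥ 0, w(0) = 0, and w(t) → 0 as t → ∞. Then w'(0) = −2/3; in particular w'(0) < 0. -/

import Mathlib

open Real Filter Set

/-- The heteroclinic solution `g(t) = tanh(t/√2)` of the 1-D Allen–Cahn equation. -/
noncomputable def hetero (t : ℝ) : ℝ := Real.tanh (t / Real.sqrt 2)

section ACHelpers

lemma ac_tanh_eq' (x : ℝ) : Real.tanh x = (1 - Real.exp (-(2*x))) / (1 + Real.exp (-(2*x))) := by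
  rw [Real.tanh_eq_sinh_div_cosh, Real.sinh_eq, Real.cosh_eq]
  have h1 : (0:ℝ) < Real.exp x := Real.exp_pos x
  have h2 : (0:ℝ) < Real.exp (-(2*x)) := Real.exp_pos _
  have e1 : Real.exp (-x) = Real.exp x * Real.exp (-(2*x)) := by
    rw [← Real.exp_add]; ring_nf
  rw [e1]
  field_simp

lemma ac_tanh_tendsto_one : Tendsto Real.tanh atTop (nhds 1) := by
  have h : Tendsto (fun x : ℝ => Real.exp (-(2*x))) atTop (nhds 0) := by
    apply Real.tendsto_exp_atBot.comp
    have h2x : Tendsto (fun x : ℝ => 2*x) atTop atTop :=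
      Tendsto.const_mul_atTop two_pos tendsto_id
    exact tendsto_neg_atTop_atBot.comp h2x
  have h2 : Tendsto (fun x : ℝ => (1 - Real.exp (-(2*x))) / (1 + Real.exp (-(2*x)))) atTop (nhds 1) := by
    have h3 := Tendsto.div ((tendsto_const_nhds (x := (1:ℝ))).sub h) ((tendsto_const_nhds (x := (1:ℝ))).add h) (by norm_num)
    rw [sub_zero, add_zero, div_one] at h3
    exact h3
  exact h2.congr (fun x => (ac_tanh_eq' x).symm)

lemma ac_hasDerivAt_tanh (x : ℝ) : HasDerivAt Real.tanh (1 - Real.tanh x ^ 2) x := by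
  have h := (Real.hasDerivAt_sinh x).div (Real.hasDerivAt_cosh x) (ne_of_gt (Real.cosh_pos x))
  have hx : Real.cosh x ≠ 0 := ne_of_gt (Real.cosh_pos x)
  have hval : (Real.cosh x * Real.cosh x - Real.sinh x * Real.sinh x) / Real.cosh x ^ 2
      = 1 - Real.tanh x ^ 2 := by
    rw [Real.tanh_eq_sinh_div_cosh]
    have id1 : Real.cosh x ^ 2 - Real.sinh x ^ 2 = 1 := Real.cosh_sq_sub_sinh_sq x
    field_simp
  have h2 : HasDerivAt Real.tanh ((Real.cosh x * Real.cosh x - Real.sinh x * Real.sinh x) / Real.cosh x ^ 2) x := by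
    apply h.congr_of_eventuallyEq
    filter_upwards with y
    rw [Real.tanh_eq_sinh_div_cosh]; rfl
  rwa [hval] at h2

lemma ac_one_sub_tanh_sq_pos (x : ℝ) : 0 < 1 - Real.tanh x ^ 2 := by
  have id1 : Real.cosh x ^ 2 - Real.sinh x ^ 2 = 1 := Real.cosh_sq_sub_sinh_sq x
  have hc : (0:ℝ) < Real.cosh x := Real.cosh_pos x
  rw [Real.tanh_eq_sinh_div_cosh, div_pow]
  have : Real.sinh x ^2 / Real.cosh x ^2 < 1 := by
    rw [div_lt_one (by positivity)]; nlinarith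
  linarith

noncomputable def acTT (t : ℝ) : ℝ := Real.tanh (t / Real.sqrt 2)
noncomputable def acPP (t : ℝ) : ℝ := (1 - acTT t ^ 2) / Real.sqrt 2
noncomputable def acQQ (t : ℝ) : ℝ := -(acTT t * (1 - acTT t ^ 2))
noncomputable def acFF (t : ℝ) : ℝ := (acTT t - acTT t ^ 3 / 3) / Real.sqrt 2

lemma ac_sqrt2_pos : (0:ℝ) < Real.sqrt 2 := Real.sqrt_pos.2 two_pos

lemma acTT_hasDerivAt (t : ℝ) : HasDerivAt acTT (acPP t) t := by
  have h1 : HasDerivAt (fun t : ℝ => t / Real.sqrt 2) (1 / Real.sqrt 2) t :=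
    (hasDerivAt_id t).div_const _
  have h2 := (ac_hasDerivAt_tanh (t / Real.sqrt 2)).comp t h1
  have : (1 - Real.tanh (t / Real.sqrt 2) ^ 2) * (1 / Real.sqrt 2) = acPP t := by
    unfold acPP acTT; ring
  rwa [this] at h2

lemma acPP_hasDerivAt (t : ℝ) : HasDerivAt acPP (acQQ t) t := by
  have h := (((acTT_hasDerivAt t).pow 2).const_sub 1).div_const (Real.sqrt 2)
  have he : acPP = fun t => (1 - acTT t ^ 2) / Real.sqrt 2 := rfl
  rw [he]
  refine h.congr_deriv ?_
  symm
  have h2i : (Real.sqrt 2)⁻¹ * (Real.sqrt 2)⁻¹ = (2:ℝ)⁻¹ := by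
    rw [← mul_inv, Real.mul_self_sqrt (by norm_num)]
  unfold acQQ acPP
  linear_combination (2 * acTT t * (1 - acTT t^2)) * h2i

lemma acQQ_hasDerivAt (t : ℝ) : HasDerivAt acQQ ((3 * acTT t ^ 2 - 1) * acPP t) t := by
  have h1 := acTT_hasDerivAt t
  have h := ((h1.mul ((h1.pow 2).const_sub 1))).neg
  have he : acQQ = fun t => -(acTT t * (1 - acTT t ^ 2)) := rfl
  rw [he]
  refine h.congr_deriv ?_
  symm
  simp only [Pi.pow_apply]
  ring

lemma acFF_hasDerivAt (t : ℝ) : HasDerivAt acFF (acPP t ^ 2) t := by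
  have h1 := acTT_hasDerivAt t
  have h := ((h1.sub ((h1.pow 3).div_const 3))).div_const (Real.sqrt 2)
  have he : acFF = fun t => (acTT t - acTT t ^ 3 / 3) / Real.sqrt 2 := rfl
  rw [he]
  refine h.congr_deriv ?_
  symm
  unfold acPP
  ring

lemma ac_deriv_hetero_eq : deriv hetero = acPP := by
  funext t
  exact (acTT_hasDerivAt t).deriv

lemma acPP_pos (t : ℝ) : 0 < acPP t := div_pos (ac_one_sub_tanh_sq_pos _) ac_sqrt2_pos

lemma acPP_le (t : ℝ) : acPP t ≤ 1 := by
  have h1 : acTT t ^2 ≥ 0 := sq_nonneg _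
  have h2 : (1:ℝ) ≤ Real.sqrt 2 := by
    rw [show (1:ℝ) = Real.sqrt 1 by simp]; exact Real.sqrt_le_sqrt (by norm_num)
  rw [acPP, div_le_one ac_sqrt2_pos]; linarith

lemma acTT_tendsto : Tendsto acTT atTop (nhds 1) := by
  apply ac_tanh_tendsto_one.comp
  exact Tendsto.atTop_div_const ac_sqrt2_pos tendsto_id

lemma acPP_tendsto : Tendsto acPP atTop (nhds 0) := by
  have h := ((tendsto_const_nhds (x := (1:ℝ))).sub (acTT_tendsto.pow 2)).div_const (Real.sqrt 2)
  unfold acPP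
  simpa using h

lemma acQQ_tendsto : Tendsto acQQ atTop (nhds 0) := by
  have h := (acTT_tendsto.mul ((tendsto_const_nhds (x := (1:ℝ))).sub (acTT_tendsto.pow 2))).neg
  unfold acQQ
  simpa using h

lemma acFF_tendsto : Tendsto acFF atTop (nhds ((1 - 1/3) / Real.sqrt 2)) := by
  have h := (acTT_tendsto.sub ((acTT_tendsto.pow 3).div_const 3)).div_const (Real.sqrt 2)
  unfold acFF
  simpa using h

lemma acTT_zero : acTT 0 = 0 := by simp [acTT, Real.tanh_zero]
lemma acPP_zero : acPP 0 = 1 / Real.sqrt 2 := by simp [acPP, acTT_zero]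
lemma acQQ_zero : acQQ 0 = 0 := by simp [acQQ, acTT_zero]
lemma acFF_zero : acFF 0 = 0 := by simp [acFF, acTT_zero]

lemma acPP_continuous : Continuous acPP :=
  (Differentiable.continuous (fun x => (acPP_hasDerivAt x).differentiableAt))
lemma acQQ_continuous : Continuous acQQ :=
  (Differentiable.continuous (fun x => (acQQ_hasDerivAt x).differentiableAt))
lemma acFF_continuous : Continuous acFF :=
  (Differentiable.continuous (fun x => (acFF_hasDerivAt x).differentiableAt))

/-- A function tending to `0` at `+∞` cannot have derivative bounded below
by a positive constant on `(T, ∞)`. -/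
lemma ac_no_growth (v : ℝ → ℝ) (hlim : Tendsto v atTop (nhds 0)) (c T : ℝ) (hc : 0 < c)
    (hcont : ContinuousOn v (Set.Ici T))
    (hdiff : ∀ t ∈ Set.Ioi T, DifferentiableAt ℝ v t)
    (hder : ∀ t ∈ Set.Ioi T, c ≤ deriv v t) : False := by
  have hmono : MonotoneOn (fun t => v t - c * t) (Set.Ici T) := by
    apply monotoneOn_of_deriv_nonneg (convex_Ici T)
    · exact hcont.sub (continuous_const.mul continuous_id).continuousOn
    · intro x hx
      rw [interior_Ici] at hx
      exact ((hdiff x hx).sub ((differentiable_id.const_mul c) x)).differentiableWithinAt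
    · intro x hx
      rw [interior_Ici] at hx
      have hct : HasDerivAt (fun t : ℝ => c * t) c x := by
        simpa using (hasDerivAt_id x).const_mul c
      have hdc : HasDerivAt (fun t : ℝ => v t - c * t) (deriv v x - c) x :=
        ((hdiff x hx).hasDerivAt).sub hct
      rw [hdc.deriv]
      linarith [hder x hx]
  have key : ∀ t, T ≤ t → v T - c*T ≤ v t - c * t := fun t ht =>
    hmono Set.self_mem_Ici ht ht
  have h1 : ∀ᶠ t in atTop, v t < 1 := hlim.eventually (gt_mem_nhds one_pos)
  have h2 : Tendsto (fun t => v T - c*T + c*t) atTop atTop :=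
    tendsto_atTop_add_const_left _ _ (Tendsto.const_mul_atTop hc tendsto_id)
  have h3 : ∀ᶠ t in atTop, 1 ≤ v T - c*T + c*t := h2.eventually_ge_atTop 1
  have h4 : ∀ᶠ t in atTop, T ≤ t := eventually_ge_atTop T
  obtain ⟨t, ht1, ht3, ht4⟩ := (h1.and (h3.and h4)).exists
  have hk := key t ht4
  linarith

end ACHelpers

/-- If `w` is `C²` on `[0,∞)` with `w'' − (3g² − 1)w = g'`, `w(0) = 0` and `w → 0` at `∞`,
then `w'(0) = −2/3 < 0`. -/
theorem w_deriv_at_zero (w : ℝ → ℝ) (hw : ContDiffOn ℝ 2 w (Set.Ici 0))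
    (hode : ∀ t : ℝ, 0 ≤ t →
      deriv (deriv w) t - (3 * hetero t ^ 2 - 1) * w t = deriv hetero t)
    (h0 : w 0 = 0) (hlim : Filter.Tendsto w Filter.atTop (nhds 0)) :
    deriv w 0 = -2/3 ∧ deriv w 0 < 0 := by
  have hφ : deriv hetero = acPP := ac_deriv_hetero_eq
  have hwc : ContinuousOn w (Set.Ici 0) := hw.continuousOn
  have hdiff : ∀ t : ℝ, 0 < t → DifferentiableAt ℝ w t := fun t ht =>
    (hw.contDiffAt (Ici_mem_nhds ht)).differentiableAt (by norm_num)
  have hd2 : ContDiffOn ℝ 1 (deriv w) (Set.Ioi 0) :=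
    (hw.mono Set.Ioi_subset_Ici_self).deriv_of_isOpen isOpen_Ioi (by norm_num)
  have hdiff' : ∀ t : ℝ, 0 < t → DifferentiableAt ℝ (deriv w) t := fun t ht =>
    (hd2.contDiffAt (isOpen_Ioi.mem_nhds ht)).differentiableAt one_ne_zero
  -- `deriv w` is differentiable at `0` (else the ODE at `0` fails)
  have hdd0 : DifferentiableAt ℝ (deriv w) 0 := by
    by_contra h
    have hz : deriv (deriv w) 0 = 0 := deriv_zero_of_not_differentiableAt h
    have h00 := hode 0 le_rfl
    rw [hz, h0, hφ, acPP_zero] at h00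
    have hh0 : hetero 0 = 0 := by simp [hetero]
    rw [hh0] at h00
    norm_num at h00
    exact absurd h00.symm (ne_of_gt ac_sqrt2_pos)
  have hC : ContinuousOn (derivWithin w (Set.Ici 0)) (Set.Ici 0) :=
    hw.continuousOn_derivWithin (uniqueDiffOn_Ici 0) (by norm_num)
  have heq : ∀ t : ℝ, 0 < t → deriv w t = derivWithin w (Set.Ici 0) t := fun t ht =>
    (derivWithin_of_mem_nhds (Ici_mem_nhds ht)).symm
  have hkey : deriv w 0 = derivWithin w (Set.Ici 0) 0 := by
    have l1 : Tendsto (deriv w) (nhdsWithin 0 (Set.Ioi 0)) (nhds (deriv w 0)) :=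
      hdd0.continuousAt.tendsto.mono_left nhdsWithin_le_nhds
    have l2 : Tendsto (derivWithin w (Set.Ici 0)) (nhdsWithin 0 (Set.Ioi 0))
        (nhds (derivWithin w (Set.Ici 0) 0)) :=
      (hC 0 Set.self_mem_Ici).mono Set.Ioi_subset_Ici_self
    have l3 : Tendsto (deriv w) (nhdsWithin 0 (Set.Ioi 0))
        (nhds (derivWithin w (Set.Ici 0) 0)) := by
      apply l2.congr'
      filter_upwards [eventually_mem_nhdsWithin] with t ht
      exact (heq t ht).symm
    exact tendsto_nhds_unique l1 l3
  have hEqOn : Set.EqOn (deriv w) (derivWithin w (Set.Ici 0)) (Set.Ici 0) := by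
    intro t ht
    rcases eq_or_lt_of_le (Set.mem_Ici.1 ht) with h|h
    · rw [← h]; exact hkey
    · exact heq t h
  have hCd : ContinuousOn (deriv w) (Set.Ici 0) := hC.congr hEqOn
  have hwd : ∀ x ∈ Set.Ici (0:ℝ), HasDerivWithinAt w (deriv w x) (Set.Ici 0) x := by
    intro x hx
    rcases eq_or_lt_of_le (Set.mem_Ici.1 hx) with h|h
    · rw [← h, hkey]
      exact ((hw.differentiableOn (by norm_num)) 0 Set.self_mem_Ici).hasDerivWithinAt
    · exact ((hdiff x h).hasDerivAt).hasDerivWithinAt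
  have hwd2 : ∀ x ∈ Set.Ici (0:ℝ), HasDerivWithinAt (deriv w) (deriv (deriv w) x) (Set.Ici 0) x := by
    intro x hx
    rcases eq_or_lt_of_le (Set.mem_Ici.1 hx) with h|h
    · rw [← h]; exact hdd0.hasDerivAt.hasDerivWithinAt
    · exact ((hdiff' x h).hasDerivAt).hasDerivWithinAt
  obtain ⟨E, hE⟩ : ∃ E : ℝ → ℝ, E = fun t => acPP t * deriv w t - acQQ t * w t := ⟨_, rfl⟩
  have hEat : ∀ t, E t = acPP t * deriv w t - acQQ t * w t := fun t => by rw [hE]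
  have hEd : ∀ x ∈ Set.Ici (0:ℝ), HasDerivWithinAt E (acPP x ^ 2) (Set.Ici 0) x := by
    intro x hx
    rw [hE]
    have h1 := ((acPP_hasDerivAt x).hasDerivWithinAt.mul (hwd2 x hx)).sub
      (((acQQ_hasDerivAt x).hasDerivWithinAt).mul (hwd x hx))
    have hode2 : deriv (deriv w) x - (3 * acTT x ^ 2 - 1) * w x = acPP x := by
      have h3 := hode x hx
      rw [hφ] at h3
      exact h3
    refine h1.congr_deriv ?_
    symm
    linear_combination (-(acPP x)) * hode2
  have cE : ContinuousOn E (Set.Ici 0) := by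
    rw [hE]
    exact (acPP_continuous.continuousOn.mul hCd).sub (acQQ_continuous.continuousOn.mul hwc)
  have hDconst : ∀ t ∈ Set.Ici (0:ℝ), E t - acFF t = E 0 - acFF 0 := by
    intro t ht
    have hcont' : ContinuousOn (fun t => E t - acFF t) (Set.Icc 0 t) :=
      (cE.sub acFF_continuous.continuousOn).mono Set.Icc_subset_Ici_self
    have hderiv' : ∀ x ∈ Set.Ico 0 t, HasDerivWithinAt (fun t => E t - acFF t) 0 (Set.Ici x) x := by
      intro x hx
      have h5 := (hEd x hx.1).sub (acFF_hasDerivAt x).hasDerivWithinAt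
      rw [sub_self] at h5
      exact h5.mono (Set.Ici_subset_Ici.2 hx.1)
    exact constant_of_has_deriv_right_zero hcont' hderiv' t ⟨ht, le_rfl⟩
  have hElim : Tendsto E atTop (nhds (E 0 + (1 - 1/3)/Real.sqrt 2)) := by
    have h1 : Tendsto (fun t => E 0 + acFF t) atTop (nhds (E 0 + (1 - 1/3)/Real.sqrt 2)) :=
      tendsto_const_nhds.add acFF_tendsto
    apply h1.congr'
    filter_upwards [eventually_ge_atTop (0:ℝ)] with t ht
    have h6 := hDconst t ht
    rw [acFF_zero, sub_zero] at h6
    linarith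
  have hPw' : Tendsto (fun t => acPP t * deriv w t) atTop (nhds (E 0 + (1 - 1/3)/Real.sqrt 2)) := by
    have h2 : Tendsto (fun t => acQQ t * w t) atTop (nhds 0) := by
      simpa using acQQ_tendsto.mul hlim
    have h3 := hElim.add h2
    rw [add_zero] at h3
    apply h3.congr
    intro t
    rw [hEat t]
    ring
  obtain ⟨L, hL⟩ : ∃ L : ℝ, L = E 0 + (1 - 1/3)/Real.sqrt 2 := ⟨_, rfl⟩
  rw [← hL] at hElim hPw'
  have hL0 : L = 0 := by
    rcases lt_trichotomy L 0 with hneg | h0' | hpos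
    · exfalso
      have hev : ∀ᶠ t in atTop, acPP t * deriv w t < L/2 :=
        hPw'.eventually (gt_mem_nhds (show L < L/2 by linarith))
      have hev2 : ∀ᶠ t in atTop, deriv w t ≤ L/2 := by
        filter_upwards [hev] with t h
        by_contra hlt
        push_neg at hlt
        have hp := acPP_pos t
        have hp1 := acPP_le t
        nlinarith [mul_pos hp (sub_pos.2 hlt), mul_nonneg (sub_nonneg.2 hp1) (show (0:ℝ) ≤ -(L/2) by linarith)]
      obtain ⟨T, hT⟩ := eventually_atTop.1 hev2
      refine ac_no_growth (fun t => -w t) (by simpa using hlim.neg) (-(L/2)) (max T 0)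
        (by linarith) ((hwc.mono (Set.Ici_subset_Ici.2 (le_max_right T 0))).neg)
        (fun t ht => (hdiff t (lt_of_le_of_lt (le_max_right T 0) ht)).neg) ?_
      intro t ht
      rw [deriv.fun_neg]
      have := hT t (le_trans (le_max_left T 0) (le_of_lt ht))
      linarith
    · exact h0'
    · exfalso
      have hev : ∀ᶠ t in atTop, L/2 < acPP t * deriv w t :=
        hPw'.eventually (lt_mem_nhds (show L/2 < L by linarith))
      have hev2 : ∀ᶠ t in atTop, L/2 ≤ deriv w t := by
        filter_upwards [hev] with t h
        by_contra hlt
        push_neg at hlt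
        have hp := acPP_pos t
        have hp1 := acPP_le t
        nlinarith [mul_pos hp (sub_pos.2 hlt), mul_nonneg (sub_nonneg.2 hp1) (show (0:ℝ) ≤ L/2 by linarith)]
      obtain ⟨T, hT⟩ := eventually_atTop.1 hev2
      refine ac_no_growth w hlim (L/2) (max T 0) (by linarith)
        (hwc.mono (Set.Ici_subset_Ici.2 (le_max_right T 0)))
        (fun t ht => hdiff t (lt_of_le_of_lt (le_max_right T 0) ht)) ?_
      intro t ht
      exact hT t (le_trans (le_max_left T 0) (le_of_lt ht))
  have hE0 : E 0 = -((1 - 1/3)/Real.sqrt 2) := by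
    rw [hL] at hL0
    linarith
  have hform : acPP 0 * deriv w 0 - acQQ 0 * w 0 = -((1 - 1/3)/Real.sqrt 2) := by
    rw [← hEat 0]; exact hE0
  rw [acPP_zero, acQQ_zero, h0, mul_zero, sub_zero] at hform
  have hd : deriv w 0 = -2/3 := by
    have hs : (1:ℝ)/Real.sqrt 2 ≠ 0 := by positivity
    apply mul_left_cancel₀ hs
    rw [hform]
    ring
  exact ⟨hd, by rw [hd]; norm_num⟩
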